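/- arXiv:1211.3478 — 4 statements merged into one kernel-verified Lean document; each statement's English description precedes it below -/
import Mathlib

section
/- Let (g, h) be a Lie pair, E an h-module, and ∇ a g-connection on E extending the h-action. Then for every a ∈ h the operator R^∇(a, x) ∈ End(E) depends only on the class x̄ = x mod h of x ∈ g, and the resulting linear map R̄^∇ : h → Hom(g/h, End(E)), R̄^∇(a)(x̄) = R^∇(a, x), is a Chevalley–Eilenberg 1-cocycle: R̄^∇([a,b]) = a · R̄^∇(b) − b · R̄^∇(a) for all a, b ∈ h. -/
/-!
Formalization of a statement from "Exponential map and L∞ algebra associated to a Lie pair"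
(Laurent-Gengoux, Stiénon, Xu), in the algebraic setting of a Lie pair (g, h) over a field
of characteristic zero.
-/

noncomputable section
open scoped TensorProduct
open UniversalEnvelopingAlgebra

variable (K : Type*) [Field K] [CharZero K]

attribute [local instance 100] LieRing.ofAssociativeRing

/-- Let `(g, h)` be a Lie pair, `E` an `h`-module (with action `ρ`), and `D` a
`g`-connection on `E` extending the `h`-action. Then for every `a ∈ h` the curvature operator
`R^D(a, x) ∈ End(E)` depends only on the class of `x` modulo `h`, and the resulting linear map
`R̄^D : h → Hom(g/h, End E)` is a Chevalley–Eilenberg 1-cocycle. -/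
theorem atiyah_cocycle_of_lie_pair
    (g : Type*) [LieRing g] [LieAlgebra K g] (h : LieSubalgebra K g)
    (E : Type*) [AddCommGroup E] [Module K E]
    (ρ : h →ₗ⁅K⁆ Module.End K E)
    (D : g →ₗ[K] Module.End K E)
    (hext : ∀ a : h, D (a : g) = ρ a)
    (R : g → g → Module.End K E)
    (hR : ∀ x y : g, R x y = D x * D y - D y * D x - D ⁅x, y⁆) :
    (∀ (a : h) (x y : g), x - y ∈ h → R (a : g) x = R (a : g) y) ∧
    ∃ Rbar : h →ₗ[K] (g ⧸ h.toSubmodule) →ₗ[K] Module.End K E,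
      (∀ (a : h) (x : g), Rbar a (Submodule.Quotient.mk x) = R (a : g) x) ∧
      (∀ (a b : h) (x : g),
        Rbar ⁅a, b⁆ (Submodule.Quotient.mk x)
          = (ρ a * Rbar b (Submodule.Quotient.mk x)
              - Rbar b (Submodule.Quotient.mk x) * ρ a
              - Rbar b (Submodule.Quotient.mk ⁅(a : g), x⁆))
            - (ρ b * Rbar a (Submodule.Quotient.mk x)
              - Rbar a (Submodule.Quotient.mk x) * ρ b
              - Rbar a (Submodule.Quotient.mk ⁅(b : g), x⁆))) := by
  classical
  -- the curvature pairing as a linear map in x, for fixed a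
  set F : g → g →ₗ[K] Module.End K E := fun a =>
    (LinearMap.mulLeft K (D a)).comp D - (LinearMap.mulRight K (D a)).comp D
      - D.comp (LieAlgebra.ad K g a) with hF
  have hFapp : ∀ a x : g, F a x = D a * D x - D x * D a - D ⁅a, x⁆ := by
    intro a x
    simp [hF, LinearMap.mulLeft, LinearMap.mulRight]
  have hvanish : ∀ (a : h) (c : g), c ∈ h → F (a : g) c = 0 := by
    intro a c hc
    have : D c = ρ ⟨c, hc⟩ := hext ⟨c, hc⟩
    have hlie : (⁅(a : g), c⁆ : g) ∈ h := h.lie_mem a.2 hc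
    have h2 : D ⁅(a : g), c⁆ = ρ ⁅a, ⟨c, hc⟩⁆ := hext ⁅a, ⟨c, hc⟩⁆
    rw [hFapp, this, hext a, h2, LieHom.map_lie]
    simp [Ring.lie_def]
  have hconst : ∀ (a : h) (x y : g), x - y ∈ h → R (a : g) x = R (a : g) y := by
    intro a x y hxy
    have := hvanish a (x - y) hxy
    rw [map_sub, sub_eq_zero] at this
    rw [hR, hR, ← hFapp, ← hFapp, this]
  refine ⟨hconst, ?_⟩
  have hker : ∀ a : h, ∀ c ∈ h.toSubmodule, F (a : g) c = 0 := fun a c hc => hvanish a c hc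
  refine ⟨{ toFun := fun a => Submodule.liftQ h.toSubmodule (F (a : g))
              (fun c hc => LinearMap.mem_ker.mpr (hker a c hc))
            map_add' := ?_
            map_smul' := ?_ }, ?_, ?_⟩
  · intro a b
    apply Submodule.linearMap_qext
    ext x
    simp [hFapp, add_mul, mul_add]
    abel
  · intro t a
    apply Submodule.linearMap_qext
    ext x
    have hs : ((t • a : h) : g) = t • (a : g) := rfl
    simp [hFapp, hs, smul_sub, mul_smul_comm, smul_mul_assoc, smul_lie]
  · intro a x
    simp [Submodule.liftQ_apply, hFapp, hR]
  · intro a b x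
    simp only [LinearMap.coe_mk, AddHom.coe_mk, Submodule.liftQ_apply, hFapp]
    have hjac : (⁅⁅(a : g), (b : g)⁆, x⁆ : g) = ⁅(a : g), ⁅(b : g), x⁆⁆ - ⁅(b : g), ⁅(a : g), x⁆⁆ := by
      rw [lie_lie]
    have hDab : D ⁅(a : g), (b : g)⁆ = ρ a * ρ b - ρ b * ρ a := by
      have := hext ⁅a, b⁆
      rw [LieHom.map_lie, Ring.lie_def] at this
      exact this
    simp only [LieSubalgebra.coe_bracket]
    rw [hDab, hjac, ← hext a, ← hext b]
    simp only [map_sub]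
    noncomm_ring
end
end

section
/- Let (g, h) be a Lie pair, E an h-module, and let ∇ and ∇′ be two g-connections on E extending the h-action. Then the map φ : g/h → End(E) given by φ(x mod h) = ∇_x − ∇′_x is well defined, and the difference of the two Atiyah cocycles is the Chevalley–Eilenberg 1-coboundary of φ: R̄^∇(a) − R̄^{∇′}(a) = a · φ for all a ∈ h. Consequently the cohomology class of the Atiyah cocycle R̄^∇ is independent of the choice of connection ∇ extending the h-action. -/
/-!
Formalization of a statement from "Exponential map and L∞ algebra associated to a Lie pair"
(Laurent-Gengoux, Stiénon, Xu), in the algebraic setting of a Lie pair (g, h) over a field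
of characteristic zero.
-/

noncomputable section
open scoped TensorProduct
open UniversalEnvelopingAlgebra
attribute [local instance 100] LieRing.ofAssociativeRing

variable (K : Type*) [Field K] [CharZero K]


/-- Let `(g, h)` be a Lie pair, `E` an `h`-module, and `D`, `D'` two
`g`-connections on `E` extending the `h`-action. Then `φ(x mod h) = Dₓ − D'ₓ` is a well-defined
linear map `g/h → End(E)` and the difference of the two Atiyah cocycles is the
Chevalley–Eilenberg coboundary of `φ`; consequently the cohomology class of the Atiyah cocycle
is independent of the choice of connection. -/
theorem atiyah_class_independent_of_connection
    (g : Type*) [LieRing g] [LieAlgebra K g] (h : LieSubalgebra K g)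
    (E : Type*) [AddCommGroup E] [Module K E]
    (ρ : h →ₗ⁅K⁆ Module.End K E)
    (D D' : g →ₗ[K] Module.End K E)
    (hext : ∀ a : h, D (a : g) = ρ a) (hext' : ∀ a : h, D' (a : g) = ρ a)
    (R R' : g → g → Module.End K E)
    (hR : ∀ x y : g, R x y = D x * D y - D y * D x - D ⁅x, y⁆)
    (hR' : ∀ x y : g, R' x y = D' x * D' y - D' y * D' x - D' ⁅x, y⁆) :
    ∃ φ : (g ⧸ h.toSubmodule) →ₗ[K] Module.End K E,
      (∀ x : g, φ (Submodule.Quotient.mk x) = D x - D' x) ∧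
      (∀ (a : h) (x : g),
        R (a : g) x - R' (a : g) x
          = ρ a * φ (Submodule.Quotient.mk x)
            - φ (Submodule.Quotient.mk x) * ρ a
            - φ (Submodule.Quotient.mk ⁅(a : g), x⁆)) := by
  refine ⟨Submodule.liftQ h.toSubmodule (D - D') ?_, ?_, ?_⟩
  · intro x hx
    simp only [LinearMap.mem_ker, LinearMap.sub_apply]
    have := hext ⟨x, hx⟩
    have := hext' ⟨x, hx⟩
    simp_all
  · intro x; rfl
  · intro a x
    have hmk : ∀ y : g, (Submodule.liftQ h.toSubmodule (D - D')
        (by intro x hx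
            simp only [LinearMap.mem_ker, LinearMap.sub_apply]
            have := hext ⟨x, hx⟩
            have := hext' ⟨x, hx⟩
            simp_all)) (Submodule.Quotient.mk y) = D y - D' y := fun y => rfl
    rw [hmk, hmk, hR, hR', hext, hext']
    noncomm_ring
end
end

section
/- Let (g, h) be a Lie pair, E an h-module, and ∇ a g-connection on E extending the h-action. There exists an h-compatible g-connection on E, i.e., a g-connection ∇′ extending the h-action such that R^{∇′}(a, x) = 0 for all a ∈ h and x ∈ g, if and only if the Atiyah cocycle R̄^∇ is a Chevalley–Eilenberg 1-coboundary, i.e., there exists φ ∈ Hom(g/h, End(E)) with R̄^∇(a) = a · φ for all a ∈ h. -/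
/-!
Formalization of a statement from "Exponential map and L∞ algebra associated to a Lie pair"
(Laurent-Gengoux, Stiénon, Xu), in the algebraic setting of a Lie pair (g, h) over a field
of characteristic zero.
-/

noncomputable section
open scoped TensorProduct
open UniversalEnvelopingAlgebra
attribute [local instance 100] LieRing.ofAssociativeRing

variable (K : Type*) [Field K] [CharZero K]


/-- Let `(g, h)` be a Lie pair, `E` an `h`-module, and `D` a `g`-connection on
`E` extending the `h`-action. There exists an `h`-compatible `g`-connection on `E` (one extending
the `h`-action with `R^{D'}(a, x) = 0` for all `a ∈ h`, `x ∈ g`) if and only if the Atiyah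
cocycle `R̄^D` is a Chevalley–Eilenberg 1-coboundary. -/
theorem atiyah_class_obstruction
    (g : Type*) [LieRing g] [LieAlgebra K g] (h : LieSubalgebra K g)
    (E : Type*) [AddCommGroup E] [Module K E]
    (ρ : h →ₗ⁅K⁆ Module.End K E)
    (D : g →ₗ[K] Module.End K E)
    (hext : ∀ a : h, D (a : g) = ρ a)
    (R : g → g → Module.End K E)
    (hR : ∀ x y : g, R x y = D x * D y - D y * D x - D ⁅x, y⁆) :
    (∃ D' : g →ₗ[K] Module.End K E,
      (∀ a : h, D' (a : g) = ρ a) ∧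
      (∀ (a : h) (x : g), D' (a : g) * D' x - D' x * D' (a : g) - D' ⁅(a : g), x⁆ = 0)) ↔
    (∃ φ : (g ⧸ h.toSubmodule) →ₗ[K] Module.End K E,
      ∀ (a : h) (x : g),
        R (a : g) x
          = ρ a * φ (Submodule.Quotient.mk x)
            - φ (Submodule.Quotient.mk x) * ρ a
            - φ (Submodule.Quotient.mk ⁅(a : g), x⁆)) := by
  constructor
  · rintro ⟨D', hext', hflat⟩
    have hker : h.toSubmodule ≤ LinearMap.ker (D - D') := by
      intro a ha
      simp only [LinearMap.mem_ker, LinearMap.sub_apply]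
      rw [hext ⟨a, ha⟩, hext' ⟨a, ha⟩, sub_self]
    refine ⟨Submodule.liftQ h.toSubmodule (D - D') hker, fun a x => ?_⟩
    have hφ : ∀ y : g, (Submodule.liftQ h.toSubmodule (D - D') hker)
        (Submodule.Quotient.mk y) = D y - D' y := fun y => by
      rw [Submodule.liftQ_apply, LinearMap.sub_apply]
    have key := hflat a x
    rw [hext' a] at key
    have hD' : D' ⁅(a : g), x⁆ = ρ a * D' x - D' x * ρ a := by
      rw [sub_eq_zero] at key; exact key.symm
    rw [hR, hφ, hφ, hD', hext a]
    noncomm_ring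
  · rintro ⟨φ, hφ⟩
    refine ⟨D - φ ∘ₗ h.toSubmodule.mkQ, fun a => ?_, fun a x => ?_⟩
    · simp only [LinearMap.sub_apply, LinearMap.comp_apply, Submodule.mkQ_apply]
      rw [(Submodule.Quotient.mk_eq_zero _).2 a.2, map_zero, sub_zero, hext a]
    · have ha : (D - φ ∘ₗ h.toSubmodule.mkQ) (a : g) = ρ a := by
        simp only [LinearMap.sub_apply, LinearMap.comp_apply, Submodule.mkQ_apply]
        rw [(Submodule.Quotient.mk_eq_zero _).2 a.2, map_zero, sub_zero, hext a]
      rw [ha]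
      simp only [LinearMap.sub_apply, LinearMap.comp_apply, Submodule.mkQ_apply]
      have hr := hφ a x
      rw [hR] at hr
      rw [← hext a] at hr ⊢
      rw [← sub_eq_zero] at hr
      rw [← hr]
      noncomm_ring
end
end

section
/- Let h be a Lie algebra and E a vector space over a field of characteristic zero, and let a ↦ δ(a) be a Lie algebra homomorphism from h into the Lie algebra of coderivations δ of the deconcatenation coalgebra S(E) satisfying δ(1) = 0. Then the first components μ₁(a) := pr_E ∘ δ(a)|_{E} define an h-module structure on E, i.e., μ₁ : h → gl(E) is a Lie algebra homomorphism. -/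
/-!
Formalization of a statement from "Exponential map and L∞ algebra associated to a Lie pair"
(Laurent-Gengoux, Stiénon, Xu), in the algebraic setting of a Lie pair (g, h) over a field
of characteristic zero.
-/

noncomputable section
open scoped TensorProduct
open UniversalEnvelopingAlgebra

attribute [local instance 100] LieRing.ofAssociativeRing

variable (K : Type*) [Field K] [CharZero K]

section Sym
variable (E : Type*) [AddCommGroup E] [Module K E]

/-- Model of the symmetric algebra `S(E)`: polynomials on a basis of `E`. -/
abbrev SymA := MvPolynomial (Module.Basis.ofVectorSpaceIndex K E) K

/-- The canonical inclusion `E → S(E)` (onto `S¹(E)`). -/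
def symι : E →ₗ[K] SymA K E :=
  (Finsupp.linearCombination K (fun i => MvPolynomial.X i)).comp
    ((Module.Basis.ofVectorSpace K E).repr : E ≃ₗ[K] _).toLinearMap

/-- Universal property of `S(E)`: the lift of a linear map into a commutative algebra,
i.e. the unique algebra morphism `S(E) → A` extending it. -/
def symLift {A : Type*} [CommRing A] [Algebra K A] (f : E →ₗ[K] A) : SymA K E →ₐ[K] A :=
  MvPolynomial.aeval fun i => f (Module.Basis.ofVectorSpace K E i)

/-- The deconcatenation comultiplication on `S(E)`, i.e. the unique algebra morphism
`S(E) → S(E) ⊗ S(E)` sending each `e ∈ E` to `e ⊗ 1 + 1 ⊗ e`. -/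
def symComul : SymA K E →ₐ[K] (SymA K E ⊗[K] SymA K E) :=
  symLift K E ((((TensorProduct.mk K (SymA K E) (SymA K E)).flip 1)
    + (TensorProduct.mk K (SymA K E) (SymA K E) 1)).comp (symι K E))

/-- The counit of `S(E)`: the unique algebra morphism `S(E) → K` killing `E`. -/
def symCounit : SymA K E →ₐ[K] K := symLift K E 0

/-- The projection `S(E) → E` onto the degree-one component `S¹(E) = E`. -/
def symPr : SymA K E →ₗ[K] E :=
  (Finsupp.lsum K fun xs : (Module.Basis.ofVectorSpaceIndex K E) →₀ ℕ =>
    (LinearMap.ringLmapEquivSelf K K E).symm <|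
      letI := Classical.propDecidable (∃ i, xs = Finsupp.single i 1)
      if h : ∃ i, xs = Finsupp.single i 1 then (Module.Basis.ofVectorSpace K E) h.choose else 0).comp
      (AddMonoidAlgebra.coeffLinearEquiv K).toLinearMap

/-- The unique derivation of `S(E)` extending the linear map `f : E → E`. -/
def symDer (f : E →ₗ[K] E) : SymA K E →ₗ[K] SymA K E :=
  (MvPolynomial.mkDerivation K fun i => symι K E (f (Module.Basis.ofVectorSpace K E i)) :
    Derivation K (SymA K E) (SymA K E)).toLinearMap

/-- The filtration `S^{≤n}(E)`: the span of products of at most `n` elements of `E`. -/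
def symFil (n : ℕ) : Submodule K (SymA K E) :=
  Submodule.span K {x | ∃ (m : ℕ) (v : Fin m → E), m ≤ n ∧ x = ∏ i, symι K E (v i)}

/-- `S^{≥1}(E) = ⊕_{m≥1} Sᵐ(E)`: the span of products of at least one element of `E`. -/
def symFilGe1 : Submodule K (SymA K E) :=
  Submodule.span K {x | ∃ (m : ℕ) (v : Fin m → E), 1 ≤ m ∧ x = ∏ i, symι K E (v i)}

/-- A coderivation of the (deconcatenation) coalgebra `S(E)`:
`Δ ∘ δ = (δ ⊗ id + id ⊗ δ) ∘ Δ`. -/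
def IsCoderivation (δ : SymA K E →ₗ[K] SymA K E) : Prop :=
  ∀ s, symComul K E (δ s)
    = TensorProduct.map δ LinearMap.id (symComul K E s)
      + TensorProduct.map LinearMap.id δ (symComul K E s)

set_option linter.unusedSectionVars false

open MvPolynomial

lemma symι_basis (i : Module.Basis.ofVectorSpaceIndex K E) :
    symι K E (Module.Basis.ofVectorSpace K E i) = X i := by
  rw [symι, LinearMap.comp_apply, LinearEquiv.coe_coe, Module.Basis.repr_self,
    Finsupp.linearCombination_single, one_smul]

lemma symComul_X (i : Module.Basis.ofVectorSpaceIndex K E) :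
    symComul K E (X i) = X i ⊗ₜ[K] 1 + 1 ⊗ₜ[K] X i := by
  have h := symι_basis K E i
  rw [Module.Basis.ofVectorSpace_apply_self] at h
  simp [symComul, symLift, h]

lemma symComul_symι (e : E) :
    symComul K E (symι K E e) = symι K E e ⊗ₜ[K] 1 + 1 ⊗ₜ[K] symι K E e := by
  have key : ((symComul K E).toLinearMap.comp (symι K E))
      = ((TensorProduct.mk K (SymA K E) (SymA K E)).flip 1
        + TensorProduct.mk K (SymA K E) (SymA K E) 1).comp (symι K E) := by
    apply Module.Basis.ext (Module.Basis.ofVectorSpace K E)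
    intro i
    simp only [LinearMap.comp_apply, LinearMap.add_apply, AlgHom.toLinearMap_apply,
      symι_basis, symComul_X]
    simp [TensorProduct.mk_apply]
  have := DFunLike.congr_fun key e
  simpa using this

/-- Scaling by 2 on generators, as computed on monomials. -/
lemma aeval_two_smul_monomial (m : (Module.Basis.ofVectorSpaceIndex K E) →₀ ℕ) (c : K) :
    (aeval fun i : Module.Basis.ofVectorSpaceIndex K E => ((2:K) • X i : SymA K E)) (monomial m c)
      = (2:K) ^ (m.sum fun _ n => n) • monomial m c := by
  rw [aeval_monomial]
  simp_rw [smul_pow, Algebra.smul_def]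
  rw [Finsupp.prod, Finset.prod_mul_distrib, ← map_prod, Finset.prod_pow_eq_pow_sum]
  rw [monomial_eq, Finsupp.prod]
  simp only [Finsupp.sum, algebraMap_eq]
  ring

lemma scaling_eq (y : SymA K E)
    (hy : symComul K E y = y ⊗ₜ[K] 1 + 1 ⊗ₜ[K] y) :
    (aeval fun i : Module.Basis.ofVectorSpaceIndex K E => ((2:K) • X i : SymA K E)) y
      = (2:K) • y := by
  have hφ : ((Algebra.TensorProduct.lmul' K (S := SymA K E)).comp (symComul K E))
      = aeval fun i : Module.Basis.ofVectorSpaceIndex K E => ((2:K) • X i : SymA K E) := by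
    apply MvPolynomial.algHom_ext
    intro i
    rw [AlgHom.comp_apply, symComul_X, map_add, Algebra.TensorProduct.lmul'_apply_tmul,
      Algebra.TensorProduct.lmul'_apply_tmul, aeval_X, one_mul, mul_one, two_smul]
  have hy2 := DFunLike.congr_fun hφ y
  rw [← hy2, AlgHom.comp_apply, hy, map_add, Algebra.TensorProduct.lmul'_apply_tmul,
    Algebra.TensorProduct.lmul'_apply_tmul, one_mul, mul_one, two_smul]

lemma support_degree_one (y : SymA K E)
    (hy : symComul K E y = y ⊗ₜ[K] 1 + 1 ⊗ₜ[K] y) :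
    ∀ m ∈ y.support, (m.sum fun _ n => n) = 1 := by
  classical
  intro m hm
  have hc : coeff m y ≠ 0 := mem_support_iff.mp hm
  have key : (2:K) ^ (m.sum fun _ n => n) * coeff m y = 2 * coeff m y := by
    have h2 := scaling_eq K E y hy
    have hl : coeff m ((aeval fun i : Module.Basis.ofVectorSpaceIndex K E =>
        ((2:K) • X i : SymA K E)) y) = (2:K) ^ (m.sum fun _ n => n) * coeff m y := by
      conv_lhs => rw [y.as_sum]
      rw [map_sum, coeff_sum]
      simp only [aeval_two_smul_monomial, coeff_smul, coeff_monomial, smul_eq_mul, mul_ite,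
        mul_zero, Finset.sum_ite_eq', hm, if_true]
    rw [h2, coeff_smul, smul_eq_mul] at hl
    exact hl.symm
  have hpow : (2:K) ^ (m.sum fun _ n => n) = 2 := mul_right_cancel₀ hc key
  have hcast : ((2 ^ (m.sum fun _ n => n) : ℕ) : K) = ((2 ^ 1 : ℕ) : K) := by
    push_cast
    exact hpow
  exact Nat.pow_right_injective (le_refl 2) (Nat.cast_injective hcast)

lemma finsupp_sum_eq_one {σ : Type*} (m : σ →₀ ℕ) (hm : (m.sum fun _ n => n) = 1) :
    ∃ i, m = Finsupp.single i 1 := by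
  classical
  rw [Finsupp.sum] at hm
  have hne : m.support.Nonempty := by
    by_contra hc
    rw [Finset.not_nonempty_iff_eq_empty] at hc
    rw [hc, Finset.sum_empty] at hm
    exact one_ne_zero hm.symm
  obtain ⟨i, hi⟩ := hne
  refine ⟨i, ?_⟩
  ext j
  rcases eq_or_ne j i with rfl | hj
  · rw [Finsupp.single_eq_same]
    have h1 : 1 ≤ m j := Nat.one_le_iff_ne_zero.mpr (Finsupp.mem_support_iff.mp hi)
    have h2 : m j ≤ ∑ k ∈ m.support, m k :=
      Finset.single_le_sum (fun _ _ => Nat.zero_le _) hi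
    omega
  · rw [Finsupp.single_eq_of_ne hj]
    by_contra hc
    have hjs : j ∈ m.support := Finsupp.mem_support_iff.mpr hc
    have h1 : 1 ≤ m i := Nat.one_le_iff_ne_zero.mpr (Finsupp.mem_support_iff.mp hi)
    have e1 : ∑ k ∈ m.support, m k = m i + ∑ k ∈ m.support.erase i, m k :=
      (Finset.add_sum_erase _ _ hi).symm
    have e2 : m j ≤ ∑ k ∈ m.support.erase i, m k :=
      Finset.single_le_sum (fun _ _ => Nat.zero_le _) (Finset.mem_erase.mpr ⟨hj, hjs⟩)
    omega

lemma primitive_eq (y : SymA K E)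
    (hy : symComul K E y = y ⊗ₜ[K] 1 + 1 ⊗ₜ[K] y) :
    symι K E (symPr K E y) = y := by
  have hdeg := support_degree_one K E y hy
  conv_lhs => rw [y.as_sum]
  conv_rhs => rw [y.as_sum]
  rw [map_sum, map_sum]
  apply Finset.sum_congr rfl
  intro m hm
  have hex : ∃ i, m = Finsupp.single i 1 := finsupp_sum_eq_one m (hdeg m hm)
  rw [symPr, LinearMap.comp_apply, ← single_eq_monomial]
  erw [Finsupp.lsum_single]
  rw [dif_pos hex, LinearMap.ringLmapEquivSelf_symm_apply, LinearMap.smulRight_apply,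
    Module.End.one_apply, map_smul, symι_basis, single_eq_monomial]
  have hms : m = Finsupp.single hex.choose 1 := hex.choose_spec
  conv_rhs => rw [hms]
  rw [X, smul_monomial, smul_eq_mul, mul_one, ← hms]

end Sym


/-- Let `δ : h → coderivations of S(E) with δ(a)(1) = 0` be a
Lie algebra homomorphism. Then the first components `μ₁(a) = pr_E ∘ δ(a)|_E` define an
`h`-module structure on `E`, i.e. `μ₁ : h → gl(E)` is a Lie algebra homomorphism. -/
theorem first_component_is_module_structure
    (h : Type*) [LieRing h] [LieAlgebra K h]
    (E : Type*) [AddCommGroup E] [Module K E]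
    (δ : h →ₗ⁅K⁆ Module.End K (SymA K E))
    (hcoder : ∀ a : h, IsCoderivation K E (δ a))
    (hone : ∀ a : h, δ a 1 = 0) :
    ∃ μ₁ : h →ₗ⁅K⁆ Module.End K E,
      ∀ (a : h) (e : E), μ₁ a e = symPr K E (δ a (symι K E e)) := by
  classical
  let L : Module.End K (SymA K E) →ₗ[K] Module.End K E :=
    { toFun := fun f => (symPr K E) ∘ₗ f ∘ₗ (symι K E)
      map_add' := fun f g => by ext e; simp
      map_smul' := fun c f => by ext e; simp }
  have hprim : ∀ (a : h) (e : E), symComul K E (δ a (symι K E e))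
      = (δ a (symι K E e)) ⊗ₜ[K] 1 + 1 ⊗ₜ[K] (δ a (symι K E e)) := by
    intro a e
    have hc := hcoder a (symι K E e)
    rw [symComul_symι] at hc
    rw [hc]
    simp [TensorProduct.map_tmul, hone a]
  have hE : ∀ (a : h) (e : E),
      symι K E (symPr K E (δ a (symι K E e))) = δ a (symι K E e) := by
    intro a e
    exact primitive_eq K E _ (hprim a e)
  refine ⟨{ toLinearMap := L ∘ₗ δ.toLinearMap, map_lie' := ?_ }, fun a e => rfl⟩
  intro a b
  ext e
  show symPr K E ((δ ⁅a, b⁆) (symι K E e))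
      = (⁅L (δ a), L (δ b)⁆ : Module.End K E) e
  rw [LieHom.map_lie, Ring.lie_def, Ring.lie_def]
  simp only [LinearMap.sub_apply, Module.End.mul_apply, map_sub]
  rw [← hE b e, ← hE a e]
  rfl
end
end
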